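/- Let M be a 3-dimensional Riemannian manifold. For each point p, the maximum Ricci curvature Ric̄(p) = max{S(X,X) : X ∈ T_pM, ‖X‖=1} equals the δ-invariant δ(2)(p) = (1/2)τ(p) − min{K(π) : π a plane in T_pM}, where S is the Ricci tensor, τ the scalar curvature, and K the sectional curvature. -/

import Mathlib

open scoped RealInnerProductSpace

noncomputable abbrev E3 := EuclideanSpace ℝ (Fin 3)

lemma trace_indep {E : Type*} [NormedAddCommGroup E] [InnerProductSpace ℝ E]
    {n : ℕ} (T : E →ₗ[ℝ] E →ₗ[ℝ] ℝ) (b c : OrthonormalBasis (Fin n) ℝ E) :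
    ∑ i, T (b i) (b i) = ∑ i, T (c i) (c i) := by
  have hb : ∀ i : Fin n, b i = ∑ j, ⟪c j, b i⟫ • c j := fun i => (c.sum_repr' (b i)).symm
  calc ∑ i, T (b i) (b i)
      = ∑ i, ∑ j, ∑ k, ⟪c j, b i⟫ * ⟪c k, b i⟫ * T (c j) (c k) := by
        refine Finset.sum_congr rfl fun i _ => ?_
        have h1 : ∀ x, T (b i) x = ∑ j, ⟪c j, b i⟫ * T (c j) x := by
          intro x
          conv_lhs => rw [hb i]
          simp [LinearMap.sum_apply, LinearMap.smul_apply, smul_eq_mul]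
        have h2 : ∀ j : Fin n, T (c j) (b i) = ∑ k, ⟪c k, b i⟫ * T (c j) (c k) := by
          intro j
          have : b i = ∑ k, ⟪c k, b i⟫ • c k := hb i
          conv_lhs => rw [this]
          simp [smul_eq_mul]
        rw [h1 (b i)]
        refine Finset.sum_congr rfl fun j _ => ?_
        rw [h2 j, Finset.mul_sum]
        exact Finset.sum_congr rfl fun k _ => by ring
    _ = ∑ j, ∑ k, (∑ i, ⟪c j, b i⟫ * ⟪b i, c k⟫) * T (c j) (c k) := by
        rw [Finset.sum_comm]
        refine Finset.sum_congr rfl fun j _ => ?_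
        rw [Finset.sum_comm]
        refine Finset.sum_congr rfl fun k _ => ?_
        rw [Finset.sum_mul]
        refine Finset.sum_congr rfl fun i _ => ?_
        rw [real_inner_comm (b i) (c k)]
    _ = ∑ j, ∑ k, (if j = k then (1:ℝ) else 0) * T (c j) (c k) := by
        refine Finset.sum_congr rfl fun j _ => Finset.sum_congr rfl fun k _ => ?_
        rw [b.sum_inner_mul_inner, orthonormal_iff_ite.mp c.orthonormal]
    _ = ∑ j, T (c j) (c j) := by simp

variable (R : E3 →ₗ[ℝ] E3 →ₗ[ℝ] E3 →ₗ[ℝ] E3 →ₗ[ℝ] ℝ)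


variable (R : E3 →ₗ[ℝ] E3 →ₗ[ℝ] E3 →ₗ[ℝ] E3 →ₗ[ℝ] ℝ)

noncomputable def slice14 (W : E3) : E3 →ₗ[ℝ] E3 →ₗ[ℝ] ℝ :=
  LinearMap.mk₂ ℝ (fun X Z => R X W W Z)
    (fun X X' Z => by simp) (fun a X Z => by simp)
    (fun X Z Z' => by simp) (fun a X Z => by simp)

noncomputable def slice23 (W : E3) : E3 →ₗ[ℝ] E3 →ₗ[ℝ] ℝ :=
  LinearMap.mk₂ ℝ (fun X Z => R W X Z W)
    (fun X X' Z => by simp) (fun a X Z => by simp)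
    (fun X Z Z' => by simp) (fun a X Z => by simp)

lemma sum14 (b : OrthonormalBasis (Fin 3) ℝ E3) (W : E3) :
    ∑ i, R (EuclideanSpace.basisFun (Fin 3) ℝ i) W W (EuclideanSpace.basisFun (Fin 3) ℝ i)
      = ∑ i, R (b i) W W (b i) := by
  simpa [slice14] using trace_indep (slice14 R W) (EuclideanSpace.basisFun (Fin 3) ℝ) b

lemma sum23 (b : OrthonormalBasis (Fin 3) ℝ E3) (W : E3) :
    ∑ i, R W (EuclideanSpace.basisFun (Fin 3) ℝ i) (EuclideanSpace.basisFun (Fin 3) ℝ i) W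
      = ∑ i, R W (b i) (b i) W := by
  simpa [slice23] using trace_indep (slice23 R W) (EuclideanSpace.basisFun (Fin 3) ℝ) b

noncomputable def Cbound : ℝ :=
  ∑ i : Fin 3, ∑ j : Fin 3, ∑ k : Fin 3, ∑ l : Fin 3,
    |R (EuclideanSpace.basisFun (Fin 3) ℝ l) (EuclideanSpace.basisFun (Fin 3) ℝ k)
       (EuclideanSpace.basisFun (Fin 3) ℝ j) (EuclideanSpace.basisFun (Fin 3) ℝ i)|

lemma abs_R_le (X Y : E3) (hX : ‖X‖ = 1) (hY : ‖Y‖ = 1) : |R X Y Y X| ≤ Cbound R := by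
  set e := EuclideanSpace.basisFun (Fin 3) ℝ with he
  have hcoord : ∀ (Z : E3) (i : Fin 3), |Z i| ≤ ‖Z‖ := by
    intro Z i
    have h1 : Z i = ⟪(e i : E3), Z⟫ := by
      rw [← e.repr_apply_apply]; simp [he]
    have h2 := abs_real_inner_le_norm (e i : E3) Z
    rw [e.orthonormal.1 i, one_mul] at h2
    rw [h1]; exact h2
  have hXr : X = ∑ i, X i • (e i : E3) := by
    have := e.sum_repr X
    simp only [EuclideanSpace.basisFun_repr] at this
    exact this.symm
  have hYr : Y = ∑ i, Y i • (e i : E3) := by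
    have := e.sum_repr Y
    simp only [EuclideanSpace.basisFun_repr] at this
    exact this.symm
  have expand : R X Y Y X =
      ∑ i, ∑ j, ∑ k, ∑ l, X i * (Y j * (Y k * (X l *
        R (e l) (e k) (e j) (e i)))) := by
    conv_lhs => rw [hXr, hYr]
    simp [map_sum, LinearMap.sum_apply, map_smul, LinearMap.smul_apply, smul_eq_mul,
      Finset.mul_sum]
  rw [expand, Cbound]
  refine (Finset.abs_sum_le_sum_abs _ _).trans (Finset.sum_le_sum fun i _ => ?_)
  refine (Finset.abs_sum_le_sum_abs _ _).trans (Finset.sum_le_sum fun j _ => ?_)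
  refine (Finset.abs_sum_le_sum_abs _ _).trans (Finset.sum_le_sum fun k _ => ?_)
  refine (Finset.abs_sum_le_sum_abs _ _).trans (Finset.sum_le_sum fun l _ => ?_)
  have hXi := (hcoord X i).trans hX.le
  have hYj := (hcoord Y j).trans hY.le
  have hYk := (hcoord Y k).trans hY.le
  have hXl := (hcoord X l).trans hX.le
  have habs : ∀ a t : ℝ, |a| ≤ 1 → |a * t| ≤ |t| := by
    intro a t ha
    rw [abs_mul]
    calc |a| * |t| ≤ 1 * |t| := mul_le_mul_of_nonneg_right ha (abs_nonneg t)
    _ = |t| := one_mul |t|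
  exact ((habs _ _ hXi).trans ((habs _ _ hYj).trans ((habs _ _ hYk).trans (habs _ _ hXl)))).trans
    (le_of_eq rfl)

/-- For a 3-dimensional Riemannian manifold (modelled pointwise by an algebraic
curvature tensor `R` on the 3-dimensional Euclidean tangent space), the maximum
Ricci curvature equals the δ-invariant δ(2): `max S(X,X) = τ/2 − min K(π)`. -/
theorem stmt_15
    (R : EuclideanSpace ℝ (Fin 3) →ₗ[ℝ] EuclideanSpace ℝ (Fin 3) →ₗ[ℝ]
         EuclideanSpace ℝ (Fin 3) →ₗ[ℝ] EuclideanSpace ℝ (Fin 3) →ₗ[ℝ] ℝ)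
    (hskew₁ : ∀ X Y Z W, R X Y Z W = -R Y X Z W)
    (hskew₂ : ∀ X Y Z W, R X Y Z W = -R X Y W Z)
    (hpair : ∀ X Y Z W, R X Y Z W = R Z W X Y)
    (hbianchi : ∀ X Y Z W, R X Y Z W + R Y Z X W + R Z X Y W = 0)
    (S : EuclideanSpace ℝ (Fin 3) → ℝ)
    (hS : ∀ X, S X = ∑ i : Fin 3,
      R (EuclideanSpace.basisFun (Fin 3) ℝ i) X X (EuclideanSpace.basisFun (Fin 3) ℝ i))
    (τ : ℝ)
    (hτ : τ = ∑ i : Fin 3, S (EuclideanSpace.basisFun (Fin 3) ℝ i)) :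
    sSup {r : ℝ | ∃ X : EuclideanSpace ℝ (Fin 3), ‖X‖ = 1 ∧ r = S X} =
      τ / 2 - sInf {k : ℝ | ∃ X Y : EuclideanSpace ℝ (Fin 3),
        ‖X‖ = 1 ∧ ‖Y‖ = 1 ∧ ⟪X, Y⟫ = 0 ∧ k = R X Y Y X} := by
  set e := EuclideanSpace.basisFun (Fin 3) ℝ with he
  set A := {r : ℝ | ∃ X : EuclideanSpace ℝ (Fin 3), ‖X‖ = 1 ∧ r = S X} with hA
  set B := {k : ℝ | ∃ X Y : EuclideanSpace ℝ (Fin 3),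
      ‖X‖ = 1 ∧ ‖Y‖ = 1 ∧ ⟪X, Y⟫ = 0 ∧ k = R X Y Y X} with hB
  have hcard : Module.finrank ℝ E3 = Fintype.card (Fin 3) := by simp
  have hzero : ∀ X Z W, R X X Z W = 0 := by
    intro X Z W; have := hskew₁ X X Z W; linarith
  have hsymm : ∀ X Y : E3, R X Y Y X = R Y X X Y := fun X Y => hpair X Y Y X
  have hSb : ∀ (b : OrthonormalBasis (Fin 3) ℝ E3) (X : E3),
      S X = ∑ i, R (b i) X X (b i) := fun b X => (hS X).trans (sum14 R b X)
  have hτb : ∀ b : OrthonormalBasis (Fin 3) ℝ E3,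
      τ = ∑ j, ∑ i, R (b i) (b j) (b j) (b i) := by
    intro b
    rw [hτ]
    calc ∑ j, S (e j) = ∑ j, ∑ i, R (b i) (e j) (e j) (b i) :=
          Finset.sum_congr rfl fun j _ => hSb b (e j)
      _ = ∑ i, ∑ j, R (b i) (e j) (e j) (b i) := Finset.sum_comm
      _ = ∑ i, ∑ j, R (b i) (b j) (b j) (b i) :=
          Finset.sum_congr rfl fun i _ => sum23 R b (b i)
      _ = ∑ j, ∑ i, R (b i) (b j) (b j) (b i) := Finset.sum_comm
  have key0 : ∀ b : OrthonormalBasis (Fin 3) ℝ E3,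
      S (b 0) = τ / 2 - R (b 1) (b 2) (b 2) (b 1) := by
    intro b
    have h1 := hSb b (b 0)
    have h2 := hτb b
    rw [Fin.sum_univ_three] at h1
    simp only [Fin.sum_univ_three] at h2
    rw [hzero (b 0) (b 0) (b 0)] at h1
    simp only [hzero] at h2
    linarith [hsymm (b 0) (b 1), hsymm (b 0) (b 2), hsymm (b 1) (b 2)]
  have key2 : ∀ b : OrthonormalBasis (Fin 3) ℝ E3,
      S (b 2) = τ / 2 - R (b 0) (b 1) (b 1) (b 0) := by
    intro b
    have h1 := hSb b (b 2)
    have h2 := hτb b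
    rw [Fin.sum_univ_three] at h1
    simp only [Fin.sum_univ_three] at h2
    rw [hzero (b 2) (b 2) (b 2)] at h1
    simp only [hzero] at h2
    linarith [hsymm (b 0) (b 1), hsymm (b 0) (b 2), hsymm (b 1) (b 2)]
  -- forward: every element of A is τ/2 - k for some k ∈ B
  have hAB : ∀ r ∈ A, ∃ k ∈ B, r = τ / 2 - k := by
    rintro r ⟨X, hX, rfl⟩
    have horth : Orthonormal ℝ (({0} : Set (Fin 3)).restrict fun _ => X) := by
      constructor
      · rintro ⟨i, hi⟩; exact hX
      · rintro ⟨i, hi⟩ ⟨j, hj⟩ hij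
        simp only [Set.mem_singleton_iff] at hi hj
        exact absurd (Subtype.ext (hi.trans hj.symm)) hij
    obtain ⟨b, hb⟩ := horth.exists_orthonormalBasis_extension_of_card_eq hcard
    have hb0 : b 0 = X := hb 0 rfl
    refine ⟨R (b 1) (b 2) (b 2) (b 1), ⟨b 1, b 2, b.orthonormal.1 1, b.orthonormal.1 2,
      b.orthonormal.2 (by decide : (1 : Fin 3) ≠ 2), rfl⟩, ?_⟩
    rw [← hb0, key0 b]
  -- backward: τ/2 - k ∈ A for every k ∈ B
  have hBA : ∀ k ∈ B, τ / 2 - k ∈ A := by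
    rintro k ⟨X, Y, hX, hY, hXY, rfl⟩
    have horth : Orthonormal ℝ (({0, 1} : Set (Fin 3)).restrict ![X, Y, 0]) := by
      constructor
      · rintro ⟨i, hi⟩
        simp only [Set.mem_insert_iff, Set.mem_singleton_iff] at hi
        rcases hi with rfl | rfl
        · exact hX
        · exact hY
      · rintro ⟨i, hi⟩ ⟨j, hj⟩ hij
        simp only [Set.mem_insert_iff, Set.mem_singleton_iff] at hi hj
        have hij' : i ≠ j := fun h => hij (Subtype.ext h)
        rcases hi with rfl | rfl <;> rcases hj with rfl | rfl
        · exact absurd rfl hij'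
        · exact hXY
        · exact (real_inner_comm X Y).trans hXY
        · exact absurd rfl hij'
    obtain ⟨b, hb⟩ := horth.exists_orthonormalBasis_extension_of_card_eq hcard
    have hb0 : b 0 = X := by simpa using hb 0 (by simp)
    have hb1 : b 1 = Y := by simpa using hb 1 (by simp)
    exact ⟨b 2, b.orthonormal.1 2, by rw [← hb0, ← hb1, key2 b]⟩
  have hBne : B.Nonempty := by
    refine ⟨R (e 0) (e 1) (e 1) (e 0), e 0, e 1, e.orthonormal.1 0, e.orthonormal.1 1, ?_, rfl⟩
    have := orthonormal_iff_ite.mp e.orthonormal 0 1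
    simpa using this
  have hBlb : ∀ k ∈ B, -(Cbound R) ≤ k := by
    rintro k ⟨X, Y, hX, hY, hXY, rfl⟩
    have := abs_R_le R X Y hX hY
    have := (abs_le.mp this).1
    linarith
  have hBbdd : BddBelow B := ⟨-(Cbound R), hBlb⟩
  have hAbdd : BddAbove A := by
    refine ⟨τ / 2 + Cbound R, fun r hr => ?_⟩
    obtain ⟨k, hk, rfl⟩ := hAB r hr
    have := hBlb k hk
    linarith
  have hAne : A.Nonempty := by
    obtain ⟨k, hk⟩ := hBne
    exact ⟨τ / 2 - k, hBA k hk⟩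
  apply le_antisymm
  · refine csSup_le hAne fun r hr => ?_
    obtain ⟨k, hk, rfl⟩ := hAB r hr
    have := csInf_le hBbdd hk
    linarith
  · have h : τ / 2 - sSup A ≤ sInf B := by
      refine le_csInf hBne fun k hk => ?_
      have := le_csSup hAbdd (hBA k hk)
      linarith
    linarith
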